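/- If the alternating group A_n acts on labelings f : Fin n → L by permuting positions, then two labelings are in the same A_n-orbit if and only if they have the same multiset of labels, provided some label is repeated (f is not injective); for injective labelings with n ≥ 2, the S_n-orbit splits into exactly two A_n-orbits. -/

import Mathlib

lemma multiset_eq_iff_exists_perm {n : ℕ} {L : Type*} (f g : Fin n → L) :
    Multiset.map g Finset.univ.val = Multiset.map f Finset.univ.val ↔
      ∃ σ : Equiv.Perm (Fin n), g = f ∘ ⇑σ := by
  rw [Fin.univ_val_map, Fin.univ_val_map, Multiset.coe_eq_coe]
  constructor
  · intro h
    letI : LinearOrder L := IsWellOrder.linearOrder WellOrderingRel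
    have h1 : (List.ofFn (g ∘ ⇑(Tuple.sort g))).Perm (List.ofFn (f ∘ ⇑(Tuple.sort f))) :=
      ((Tuple.sort g).ofFn_comp_perm g).trans
        (h.trans ((Tuple.sort f).ofFn_comp_perm f).symm)
    have h2 : g ∘ Tuple.sort g = f ∘ Tuple.sort f := by
      apply List.ofFn_injective
      exact List.Perm.eq_of_sortedLE
        ((Tuple.monotone_sort g).sortedLE_ofFn) ((Tuple.monotone_sort f).sortedLE_ofFn) h1
    refine ⟨Tuple.sort f * (Tuple.sort g)⁻¹, ?_⟩
    funext i
    have := congrFun h2 ((Tuple.sort g)⁻¹ i)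
    simpa using this
  · rintro ⟨σ, rfl⟩
    exact σ.ofFn_comp_perm f

/-- Orbits of the alternating group on labelings `f : Fin n → L`:
if `f` is not injective, two labelings lie in the same `A_n`-orbit iff they have the
same multiset of labels; if `f` is injective and `n ≥ 2`, the `S_n`-orbit of `f`
splits into exactly two `A_n`-orbits. -/
theorem stmt7 {n : ℕ} {L : Type*} (f : Fin n → L) :
    (¬ Function.Injective f →
      ∀ g : Fin n → L,
        ((∃ τ ∈ alternatingGroup (Fin n), g = f ∘ ⇑τ) ↔
          Multiset.map g Finset.univ.val = Multiset.map f Finset.univ.val)) ∧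
    (Function.Injective f → 2 ≤ n →
      ∃ g₁ g₂ : Fin n → L,
        (∃ σ : Equiv.Perm (Fin n), g₁ = f ∘ ⇑σ) ∧
        (∃ σ : Equiv.Perm (Fin n), g₂ = f ∘ ⇑σ) ∧
        (¬ ∃ τ ∈ alternatingGroup (Fin n), g₂ = g₁ ∘ ⇑τ) ∧
        ∀ g : Fin n → L, (∃ σ : Equiv.Perm (Fin n), g = f ∘ ⇑σ) →
          (∃ τ ∈ alternatingGroup (Fin n), g = g₁ ∘ ⇑τ) ∨
          (∃ τ ∈ alternatingGroup (Fin n), g = g₂ ∘ ⇑τ)) := by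
  constructor
  · intro hf g
    rw [multiset_eq_iff_exists_perm]
    constructor
    · rintro ⟨τ, -, rfl⟩; exact ⟨τ, rfl⟩
    · rintro ⟨σ, rfl⟩
      simp only [Function.Injective, not_forall] at hf
      obtain ⟨i, j, hij, hne⟩ := hf
      have hfs : f ∘ ⇑(Equiv.swap i j) = f := by
        funext x
        rcases eq_or_ne x i with rfl | hxi
        · simpa [Equiv.swap_apply_left] using hij.symm
        rcases eq_or_ne x j with rfl | hxj
        · simpa [Equiv.swap_apply_right] using hij
        · simp [Equiv.swap_apply_of_ne_of_ne hxi hxj]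
      by_cases hσ : σ ∈ alternatingGroup (Fin n)
      · exact ⟨σ, hσ, rfl⟩
      · refine ⟨Equiv.swap i j * σ, ?_, ?_⟩
        · rw [Equiv.Perm.mem_alternatingGroup] at hσ ⊢
          rw [map_mul, Equiv.Perm.sign_swap hne]
          rcases Int.units_eq_one_or (Equiv.Perm.sign σ) with h | h
          · exact absurd h hσ
          · rw [h]; rfl
        · funext x
          simp [← congrFun hfs (σ x)]
  · intro hf hn
    have h01 : (⟨0, by omega⟩ : Fin n) ≠ ⟨1, by omega⟩ := by
      simp [Fin.ext_iff]
    set s : Equiv.Perm (Fin n) := Equiv.swap ⟨0, by omega⟩ ⟨1, by omega⟩ with hs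
    have hsgn : Equiv.Perm.sign s = -1 := Equiv.Perm.sign_swap h01
    refine ⟨f, f ∘ ⇑s, ⟨1, by simp⟩, ⟨s, rfl⟩, ?_, ?_⟩
    · rintro ⟨τ, hτ, hτe⟩
      have : s = τ := Equiv.ext fun x => hf (congrFun hτe x)
      rw [Equiv.Perm.mem_alternatingGroup, ← this, hsgn] at hτ
      exact absurd hτ (by decide)
    · rintro g ⟨σ, rfl⟩
      by_cases hσ : σ ∈ alternatingGroup (Fin n)
      · exact Or.inl ⟨σ, hσ, rfl⟩
      · refine Or.inr ⟨s * σ, ?_, ?_⟩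
        · rw [Equiv.Perm.mem_alternatingGroup] at hσ ⊢
          rw [map_mul, hsgn]
          rcases Int.units_eq_one_or (Equiv.Perm.sign σ) with h | h
          · exact absurd h hσ
          · rw [h]; rfl
        · funext x
          simp [hs, Equiv.swap_apply_self]
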